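/- Let G = (V,E) be a finite directed graph, let B ⊆ V be a split of G of size k, and let A be an alphabet of size s. The split network N_G (a multiple unicast network with k input and k output nodes) is solvable over A if and only if the graph G has private entropy k over A (E(G,s) = k), and also if and only if G has public entropy k over A (E^public(G,s) = k). -/

import Mathlib

open Finset

/-! ## Basic setup: directed graphs, guessing games, entropy (Riis, "Graph Entropy,
Network Coding and Guessing games"). -/

/-- The set `N⁻(j)` of in-neighbours of a vertex `j` in the directed graph given by
the edge relation `E` (an edge `(i,j)` is `E i j`). -/
def inNbr {V : Type*} [Fintype V] (E : V → V → Prop) [DecidableRel E] (j : V) : Finset V :=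
  Finset.univ.filter (fun i => E i j)

/-- `p` is a probability distribution on `V → A`. -/
def IsProbDist {V A : Type*} [Fintype V] [DecidableEq V] [Fintype A] (p : (V → A) → ℝ) : Prop :=
  (∀ x, 0 ≤ p x) ∧ ∑ x : V → A, p x = 1

/-- The marginal probability, under `p`, that the coordinates in `S` agree with `y`. -/
noncomputable def marginalPMF {V A : Type*} [Fintype V] [DecidableEq V] [Fintype A] [DecidableEq A]
    (p : (V → A) → ℝ) (S : Finset V) (y : ↥S → A) : ℝ :=
  ∑ x : V → A, if ∀ i : ↥S, x i.1 = y i then p x else 0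

/-- `Hent s p S` : the base-`s` Shannon entropy of the marginal of `p` on the
coordinates in `S` (using `Real.negMulLog`, so the convention `0·log(1/0) = 0` holds). -/
noncomputable def Hent {V A : Type*} [Fintype V] [DecidableEq V] [Fintype A] [DecidableEq A]
    (s : ℕ) (p : (V → A) → ℝ) (S : Finset V) : ℝ :=
  (∑ y : ↥S → A, Real.negMulLog (marginalPMF p S y)) / Real.log s

/-- `p` satisfies the information constraints of the graph: `H(j | N⁻(j)) = 0` for every
vertex `j`, where `H(X | Y) = H(X ∪ Y) − H(Y)`. -/
def InfoConstraints {V A : Type*} [Fintype V] [DecidableEq V] [Fintype A] [DecidableEq A]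
    (E : V → V → Prop) [DecidableRel E] (s : ℕ) (p : (V → A) → ℝ) : Prop :=
  ∀ j : V, Hent s p (insert j (inNbr E j)) - Hent s p (inNbr E j) = 0

/-- The (private) entropy `E(G,s)` of the graph over an alphabet of size `s`:
the sup of `H_p(V)` over probability distributions on `A^V` (`A = Fin s`)
satisfying the information constraints of the graph. -/
noncomputable def graphEntropy {V : Type*} [Fintype V] [DecidableEq V]
    (E : V → V → Prop) [DecidableRel E] (s : ℕ) : ℝ :=
  sSup {h : ℝ | ∃ p : (V → Fin s) → ℝ,
    IsProbDist p ∧ InfoConstraints E s p ∧ h = Hent s p Finset.univ}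

/-- The general entropy `E(G) = sup_{s ≥ 2} E(G,s)`. -/
noncomputable def genEntropy {V : Type*} [Fintype V] [DecidableEq V]
    (E : V → V → Prop) [DecidableRel E] : ℝ :=
  sSup {h : ℝ | ∃ s : ℕ, 2 ≤ s ∧ h = graphEntropy E s}

/-- A guessing strategy: each vertex `j` guesses a value `g j x` which may only depend on
the values `x i` for in-neighbours `i` of `j`. -/
def IsStrategy {V A : Type*} (E : V → V → Prop) (g : V → (V → A) → A) : Prop :=
  ∀ j x y, (∀ i, E i j → x i = y i) → g j x = g j y

/-- The set of assignments at which all players guess correctly. -/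
def correctSet {V A : Type*} [Fintype V] [DecidableEq V] [Fintype A] [DecidableEq A]
    (g : V → (V → A) → A) : Finset (V → A) :=
  Finset.univ.filter (fun x => ∀ j, g j x = x j)

/-- The maximal number of assignments at which all players guess correctly,
over all guessing strategies (over the alphabet `Fin s`). -/
noncomputable def maxCorrect {V : Type*} [Fintype V] [DecidableEq V]
    (E : V → V → Prop) [DecidableRel E] (s : ℕ) : ℕ :=
  sSup {m : ℕ | ∃ g : V → (V → Fin s) → Fin s, IsStrategy E g ∧ m = (correctSet g).card}

/-- The maximal probability (with `x` uniform on `A^V`) that all players guess correctly. -/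
noncomputable def maxProb {V : Type*} [Fintype V] [DecidableEq V]
    (E : V → V → Prop) [DecidableRel E] (s : ℕ) : ℝ :=
  (maxCorrect E s : ℝ) / (s : ℝ) ^ Fintype.card V

/-- The guessing number `g(G,s)`: the unique `α` with maximal success probability
`(1/s)^(n−α)`, i.e. `α = n + log_s (maximal probability)`. -/
noncomputable def guessingNumber {V : Type*} [Fintype V] [DecidableEq V]
    (E : V → V → Prop) [DecidableRel E] (s : ℕ) : ℝ :=
  (Fintype.card V : ℝ) + Real.logb s (maxProb E s)

/-- The general guessing number `g(G) = sup_{s ≥ 2} g(G,s)`. -/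
noncomputable def genGuessing {V : Type*} [Fintype V] [DecidableEq V]
    (E : V → V → Prop) [DecidableRel E] : ℝ :=
  sSup {h : ℝ | ∃ s : ℕ, 2 ≤ s ∧ h = guessingNumber E s}

/-! ## Entropy-like functions -/

/-- An S-entropy-like function: `f ∅ = 0`, monotone and submodular (the polymatroidal
axioms, equivalently Shannon's information inequalities). -/
def SEntLike {U : Type*} [DecidableEq U] (f : Finset U → ℝ) : Prop :=
  f ∅ = 0 ∧ (∀ X Y, X ⊆ Y → f X ≤ f Y) ∧ ∀ X Y, f (X ∩ Y) + f (X ∪ Y) ≤ f X + f Y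

/-- Mutual information `I_f(X;Y|Z)` of an entropy-like function. -/
def mutI {U : Type*} [DecidableEq U] (f : Finset U → ℝ) (X Y Z : Finset U) : ℝ :=
  f (X ∪ Z) + f (Y ∪ Z) - f (X ∪ Y ∪ Z) - f Z

/-- A Zhang–Yeung entropy-like function: S-entropy-like and satisfying the ZY
non-Shannon information inequality for all `A B C D`. -/
def ZYEntLike {U : Type*} [DecidableEq U] (f : Finset U → ℝ) : Prop :=
  SEntLike f ∧ ∀ A B C D : Finset U,
    2 * mutI f C D ∅ ≤ mutI f A B ∅ + mutI f A (C ∪ D) ∅ + 3 * mutI f C D A + mutI f C D B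

/-- `f` satisfies the information constraints of the graph:
`f(N⁻(j) ∪ {j}) = f(N⁻(j))` for every vertex `j`. -/
def FConstraints {V : Type*} [Fintype V] [DecidableEq V]
    (E : V → V → Prop) [DecidableRel E] (f : Finset V → ℝ) : Prop :=
  ∀ j : V, f (insert j (inNbr E j)) = f (inNbr E j)

/-- The S-entropy `E_S(G)`: the maximal value of `f(V)` over normalized S-entropy-like
functions satisfying the information constraints of `G`. -/
noncomputable def SEnt {V : Type*} [Fintype V] [DecidableEq V]
    (E : V → V → Prop) [DecidableRel E] : ℝ :=
  sSup {h : ℝ | ∃ f : Finset V → ℝ,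
    SEntLike f ∧ (∀ j : V, f {j} ≤ 1) ∧ FConstraints E f ∧ h = f Finset.univ}

/-- The ZY-entropy `E_ZY(G)`. -/
noncomputable def ZYEnt {V : Type*} [Fintype V] [DecidableEq V]
    (E : V → V → Prop) [DecidableRel E] : ℝ :=
  sSup {h : ℝ | ∃ f : Finset V → ℝ,
    ZYEntLike f ∧ (∀ j : V, f {j} ≤ 1) ∧ FConstraints E f ∧ h = f Finset.univ}

/-! ## Acyclicity -/

/-- The subgraph induced on `S` is acyclic: no directed cycle within `S`. -/
def AcyclicOn {V : Type*} (E : V → V → Prop) (S : Finset V) : Prop :=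
  ∀ v ∈ S, ¬ Relation.TransGen (fun a b => a ∈ S ∧ b ∈ S ∧ E a b) v v

/-- The acyclic independence number: the maximal size of a vertex set inducing an
acyclic subgraph. -/
noncomputable def acycIndepNum {V : Type*} [Fintype V] (E : V → V → Prop) : ℕ :=
  sSup {k : ℕ | ∃ S : Finset V, AcyclicOn E S ∧ k = S.card}

/-! ## Index codes -/

/-- An index code protocol: a broadcast map `Φ` together with decoding functions `d j`
(depending only on the in-neighbour values and the broadcast message) recovering `x j`. -/
def IsIndexCode {V A W : Type*} (E : V → V → Prop)
    (Φ : (V → A) → W) (d : V → (V → A) → W → A) : Prop :=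
  (∀ (j : V) (x y : V → A) (w : W), (∀ i, E i j → x i = y i) → d j x w = d j y w) ∧
  ∀ (x : V → A) (j : V), d j x (Φ x) = x j

/-- The length `log_s |Φ(A^V)|` of an index code protocol. -/
noncomputable def protocolLength {V A W : Type*} [Fintype V] [DecidableEq V] [Fintype A]
    [Fintype W] [DecidableEq W] (s : ℕ) (Φ : (V → A) → W) : ℝ :=
  Real.logb s ((Finset.univ.image Φ).card)

/-- The base-`s` entropy of the broadcast message `Φ(x)` for `x` uniform on `A^V`. -/
noncomputable def protocolEntropy {V A W : Type*} [Fintype V] [DecidableEq V] [Fintype A]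
    [DecidableEq A] [Fintype W] [DecidableEq W] (s : ℕ) (Φ : (V → A) → W) : ℝ :=
  (∑ w : W, Real.negMulLog
    (((Finset.univ.filter (fun x : V → A => Φ x = w)).card : ℝ) / (s : ℝ) ^ Fintype.card V))
    / Real.log s

/-- `i(G,s)`: the minimal length of an index code for `G` over `Fin s`. -/
noncomputable def indexCodeLen {V : Type*} [Fintype V] [DecidableEq V]
    (E : V → V → Prop) [DecidableRel E] (s : ℕ) : ℝ :=
  sInf {h : ℝ | ∃ (W : Type) (iW : Fintype W) (dW : DecidableEq W)
    (Φ : (V → Fin s) → W) (d : V → (V → Fin s) → W → Fin s),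
    IsIndexCode E Φ d ∧ h = @protocolLength V (Fin s) W _ _ _ iW dW s Φ}

/-- `i_entro(G,s)`: the minimal entropy of an index code for `G` over `Fin s`. -/
noncomputable def indexCodeEntro {V : Type*} [Fintype V] [DecidableEq V]
    (E : V → V → Prop) [DecidableRel E] (s : ℕ) : ℝ :=
  sInf {h : ℝ | ∃ (W : Type) (iW : Fintype W) (dW : DecidableEq W)
    (Φ : (V → Fin s) → W) (d : V → (V → Fin s) → W → Fin s),
    IsIndexCode E Φ d ∧ h = @protocolEntropy V (Fin s) W _ _ _ _ iW dW s Φ}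

/-- The information constraints on `V ∪ {w}` (`w = none`) used to define the S/ZY-minimal
index code: `f(N⁻(j) ∪ {w} ∪ {j}) = f(N⁻(j) ∪ {w})` for each `j`, `f(V ∪ {w}) = f(V)`
and `f(V) = n`. -/
def WConstraints {V : Type*} [Fintype V] [DecidableEq V]
    (E : V → V → Prop) [DecidableRel E] (f : Finset (Option V) → ℝ) : Prop :=
  (∀ j : V, f (insert (some j) (insert none ((inNbr E j).image some)))
      = f (insert none ((inNbr E j).image some))) ∧
  f (insert none ((Finset.univ : Finset V).image some))
      = f ((Finset.univ : Finset V).image some) ∧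
  f ((Finset.univ : Finset V).image some) = (Fintype.card V : ℝ)

/-- The S-minimal index code `i_S(G)`. -/
noncomputable def iS {V : Type*} [Fintype V] [DecidableEq V]
    (E : V → V → Prop) [DecidableRel E] : ℝ :=
  sInf {h : ℝ | ∃ f : Finset (Option V) → ℝ,
    SEntLike f ∧ (∀ j : V, f {some j} ≤ 1) ∧ WConstraints E f ∧ h = f {none}}

/-- The ZY-minimal index code `i_ZY(G)`. -/
noncomputable def iZY {V : Type*} [Fintype V] [DecidableEq V]
    (E : V → V → Prop) [DecidableRel E] : ℝ :=
  sInf {h : ℝ | ∃ f : Finset (Option V) → ℝ,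
    ZYEntLike f ∧ (∀ j : V, f {some j} ≤ 1) ∧ WConstraints E f ∧ h = f {none}}

/-! ## The bidirected pentagon `C5` -/

/-- The pentagon with bidirected edges: vertices `Fin 5`, edges between cyclically
adjacent vertices. -/
def E5 : Fin 5 → Fin 5 → Prop := fun i j => (i.1 + 1) % 5 = j.1 ∨ (j.1 + 1) % 5 = i.1

instance : DecidableRel E5 := fun i j => by unfold E5; infer_instance
section RiisAux
set_option linter.unusedSectionVars false

section NegMulLog
variable {ι : Type*} [DecidableEq ι]

lemma negMulLog_term_le {t : Finset ι} {f : ι → ℝ} (hf : ∀ i ∈ t, 0 ≤ f i)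
    {i : ι} (hi : i ∈ t) : -(f i * Real.log (∑ j ∈ t, f j)) ≤ Real.negMulLog (f i) := by
  rcases (hf i hi).eq_or_lt with h | h
  · simp [← h]
  · rw [Real.negMulLog, neg_mul]
    exact neg_le_neg (mul_le_mul_of_nonneg_left
      (Real.log_le_log h (Finset.single_le_sum hf hi)) h.le)

lemma negMulLog_expand {t : Finset ι} (f : ι → ℝ) :
    Real.negMulLog (∑ j ∈ t, f j) = ∑ i ∈ t, -(f i * Real.log (∑ j ∈ t, f j)) := by
  rw [Real.negMulLog, neg_mul, Finset.sum_mul, ← Finset.sum_neg_distrib]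

lemma negMulLog_sum_le {t : Finset ι} {f : ι → ℝ} (hf : ∀ i ∈ t, 0 ≤ f i) :
    Real.negMulLog (∑ j ∈ t, f j) ≤ ∑ i ∈ t, Real.negMulLog (f i) := by
  rw [negMulLog_expand]
  exact Finset.sum_le_sum fun i hi => negMulLog_term_le hf hi

lemma negMulLog_sum_lt {t : Finset ι} {f : ι → ℝ} (hf : ∀ i ∈ t, 0 ≤ f i)
    {a b : ι} (ha : a ∈ t) (hb : b ∈ t) (hab : a ≠ b) (hfa : 0 < f a) (hfb : 0 < f b) :
    Real.negMulLog (∑ j ∈ t, f j) < ∑ i ∈ t, Real.negMulLog (f i) := by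
  rw [negMulLog_expand]
  refine Finset.sum_lt_sum (fun i hi => negMulLog_term_le hf hi) ⟨a, ha, ?_⟩
  have hlt : f a < ∑ j ∈ t, f j := by
    rw [← Finset.add_sum_erase t f ha]
    have hble : f b ≤ ∑ j ∈ t.erase a, f j :=
      Finset.single_le_sum (fun i hi => hf i (Finset.mem_of_mem_erase hi))
        (Finset.mem_erase.2 ⟨hab.symm, hb⟩)
    linarith
  rw [Real.negMulLog, neg_mul]
  exact neg_lt_neg (mul_lt_mul_of_pos_left (Real.log_lt_log hfa hlt) hfa)

lemma negMulLog_sum_eq {t : Finset ι} {f : ι → ℝ}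
    (h : ∀ a ∈ t, ∀ b ∈ t, f a ≠ 0 → f b ≠ 0 → a = b) :
    Real.negMulLog (∑ j ∈ t, f j) = ∑ i ∈ t, Real.negMulLog (f i) := by
  classical
  have h1 : ∑ j ∈ t, f j = ∑ j ∈ t.filter (fun j => f j ≠ 0), f j :=
    (Finset.sum_filter_ne_zero t).symm
  have h2 : ∑ i ∈ t, Real.negMulLog (f i)
      = ∑ i ∈ t.filter (fun j => f j ≠ 0), Real.negMulLog (f i) := by
    refine (Finset.sum_subset (Finset.filter_subset _ _) ?_).symm
    intro x hx hx'
    have : f x = 0 := by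
      by_contra hne
      exact hx' (Finset.mem_filter.2 ⟨hx, hne⟩)
    simp [this]
  rw [h1, h2]
  rcases Finset.eq_empty_or_nonempty (t.filter (fun j => f j ≠ 0)) with he | ⟨a, ha⟩
  · simp [he]
  · have : t.filter (fun j => f j ≠ 0) = {a} := by
      apply Finset.eq_singleton_iff_unique_mem.2
      refine ⟨ha, fun b hb => ?_⟩
      obtain ⟨hbt, hbf⟩ := Finset.mem_filter.1 hb
      obtain ⟨hat, haf⟩ := Finset.mem_filter.1 ha
      exact h b hbt a hat hbf haf
    simp [this]

lemma sum_negMulLog_le_log_card {t : Finset ι} (ht : t.Nonempty) {f : ι → ℝ}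
    (h0 : ∀ i ∈ t, 0 ≤ f i) (h1 : ∑ i ∈ t, f i = 1) :
    ∑ i ∈ t, Real.negMulLog (f i) ≤ Real.log t.card := by
  have hc : (0 : ℝ) < t.card := by exact_mod_cast Finset.card_pos.2 ht
  have hJ := Real.concaveOn_negMulLog.le_map_sum (t := t)
    (w := fun _ => (t.card : ℝ)⁻¹) (p := f)
    (fun i _ => by positivity)
    (by rw [Finset.sum_const, nsmul_eq_mul]; field_simp)
    (fun i hi => h0 i hi)
  have hs : ∑ i ∈ t, (t.card : ℝ)⁻¹ • f i = (t.card : ℝ)⁻¹ := by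
    simp only [smul_eq_mul, ← Finset.mul_sum, h1, mul_one]
  rw [hs] at hJ
  have hcard : Real.negMulLog ((t.card : ℝ)⁻¹) = (t.card : ℝ)⁻¹ * Real.log t.card := by
    rw [Real.negMulLog, Real.log_inv]; ring
  have : ∑ i ∈ t, ((t.card : ℝ)⁻¹ * Real.negMulLog (f i)) ≤ (t.card : ℝ)⁻¹ * Real.log t.card := by
    simpa [smul_eq_mul, hcard] using hJ
  rw [← Finset.mul_sum] at this
  calc ∑ i ∈ t, Real.negMulLog (f i)
      = (t.card : ℝ) * ((t.card : ℝ)⁻¹ * ∑ i ∈ t, Real.negMulLog (f i)) := by field_simp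
    _ ≤ (t.card : ℝ) * ((t.card : ℝ)⁻¹ * Real.log t.card) := by
        apply mul_le_mul_of_nonneg_left this hc.le
    _ = Real.log t.card := by field_simp

end NegMulLog
section Marginal
variable {V A : Type*} [Fintype V] [DecidableEq V] [Fintype A] [DecidableEq A]

/-- Extend a function on `↥S` to `↥(insert j S)` with value `a` outside `S`. -/
def extFun (S : Finset V) (j : V) (y : ↥S → A) (a : A) : ↥(insert j S) → A :=
  fun i => if h : (i : V) ∈ S then y ⟨i, h⟩ else a

lemma agrees_extFun {S : Finset V} {j : V} (hj : j ∉ S) (x : V → A) (y : ↥S → A) (a : A) :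
    (∀ i : ↥(insert j S), x i.1 = extFun S j y a i) ↔ ((∀ i : ↥S, x i.1 = y i) ∧ x j = a) := by
  constructor
  · intro h
    refine ⟨fun i => ?_, ?_⟩
    · have := h ⟨i.1, Finset.mem_insert_of_mem i.2⟩
      rwa [extFun, dif_pos i.2] at this
    · have := h ⟨j, Finset.mem_insert_self j S⟩
      rwa [extFun, dif_neg hj] at this
  · rintro ⟨h1, h2⟩ i
    rcases Finset.mem_insert.1 i.2 with h | h
    · rw [extFun, dif_neg (fun hS => hj (h ▸ hS)), h, h2]
    · rw [extFun, dif_pos h]; exact h1 ⟨i.1, h⟩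

lemma if_agree_nonneg {p : (V → A) → ℝ} (hp : ∀ x, 0 ≤ p x) {S : Finset V} (y : ↥S → A)
    (z : V → A) : (0:ℝ) ≤ if ∀ i : ↥S, z i.1 = y i then p z else 0 := by
  split
  · exact hp z
  · exact le_rfl

lemma marginalPMF_nonneg {p : (V → A) → ℝ} (hp : ∀ x, 0 ≤ p x) (S : Finset V) (y : ↥S → A) :
    0 ≤ marginalPMF p S y :=
  Finset.sum_nonneg fun x _ => if_agree_nonneg hp y x

lemma marginalPMF_pos {p : (V → A) → ℝ} (hp : ∀ x, 0 ≤ p x) {S : Finset V} {y : ↥S → A}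
    {x : V → A} (hx : 0 < p x) (hagr : ∀ i : ↥S, x i.1 = y i) : 0 < marginalPMF p S y := by
  have h2 := Finset.single_le_sum
    (f := fun z : V → A => if ∀ i : ↥S, z i.1 = y i then p z else 0)
    (fun z _ => if_agree_nonneg hp y z) (Finset.mem_univ x)
  simp only [if_pos hagr] at h2
  exact lt_of_lt_of_le hx h2

lemma marginalPMF_exists_pos {p : (V → A) → ℝ} {S : Finset V} {y : ↥S → A}
    (h : marginalPMF p S y ≠ 0) : ∃ x : V → A, p x ≠ 0 ∧ ∀ i : ↥S, x i.1 = y i := by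
  obtain ⟨x, _, hx⟩ := Finset.exists_ne_zero_of_sum_ne_zero h
  by_cases hagr : ∀ i : ↥S, x i.1 = y i
  · rw [if_pos hagr] at hx
    exact ⟨x, hx, hagr⟩
  · rw [if_neg hagr] at hx
    exact absurd rfl hx

lemma marginalPMF_ext_sum (p : (V → A) → ℝ) {S : Finset V} {j : V} (hj : j ∉ S) (y : ↥S → A) :
    ∑ a : A, marginalPMF p (insert j S) (extFun S j y a) = marginalPMF p S y := by
  unfold marginalPMF
  rw [Finset.sum_comm]
  refine Finset.sum_congr rfl fun x _ => ?_
  rw [Finset.sum_congr rfl fun a _ => if_congr (agrees_extFun hj x y a) rfl rfl]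
  by_cases hagr : ∀ i : ↥S, x i.1 = y i
  · rw [if_pos hagr, Finset.sum_congr rfl fun a _ => if_congr (and_iff_right hagr) rfl rfl,
      Finset.sum_ite_eq univ (x j) (fun _ => p x), if_pos (Finset.mem_univ _)]
  · rw [if_neg hagr, Finset.sum_congr rfl fun a _ => if_neg (fun h => hagr h.1),
      Finset.sum_const_zero]

/-- Equivalence used to split a sum over `↥(insert j S) → A`. -/
def extEquiv (S : Finset V) (j : V) (hj : j ∉ S) : ((↥S → A) × A) ≃ (↥(insert j S) → A) where
  toFun := fun ya => extFun S j ya.1 ya.2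
  invFun := fun z => (fun i => z ⟨i.1, Finset.mem_insert_of_mem i.2⟩,
    z ⟨j, Finset.mem_insert_self j S⟩)
  left_inv := by
    rintro ⟨y, a⟩
    refine Prod.ext (funext fun i => ?_) ?_
    · show extFun S j y a _ = y i
      rw [extFun, dif_pos i.2]
    · show extFun S j y a _ = a
      rw [extFun, dif_neg hj]
  right_inv := by
    intro z
    funext i
    show extFun S j _ _ i = z i
    rcases Finset.mem_insert.1 i.2 with h | h
    · have hi : i = ⟨j, Finset.mem_insert_self j S⟩ := Subtype.ext h
      rw [extFun, dif_neg (fun hS => hj (h ▸ hS)), hi]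
    · rw [extFun, dif_pos h]

lemma sum_insert_split {S : Finset V} {j : V} (hj : j ∉ S) (F : (↥(insert j S) → A) → ℝ) :
    ∑ z : ↥(insert j S) → A, F z = ∑ y : ↥S → A, ∑ a : A, F (extFun S j y a) := by
  calc ∑ z : ↥(insert j S) → A, F z
      = ∑ ya : (↥S → A) × A, F (extFun S j ya.1 ya.2) :=
        (Fintype.sum_equiv (extEquiv S j hj) (fun ya => F (extFun S j ya.1 ya.2)) F
          (fun ya => rfl)).symm
    _ = ∑ y : ↥S → A, ∑ a : A, F (extFun S j y a) := Fintype.sum_prod_type _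

lemma hent_sum_le {p : (V → A) → ℝ} (hp : ∀ x, 0 ≤ p x) {S : Finset V} {j : V} (hj : j ∉ S) :
    ∑ y : ↥S → A, Real.negMulLog (marginalPMF p S y)
      ≤ ∑ z : ↥(insert j S) → A, Real.negMulLog (marginalPMF p (insert j S) z) := by
  rw [sum_insert_split hj]
  refine Finset.sum_le_sum fun y _ => ?_
  rw [← marginalPMF_ext_sum p hj y]
  exact negMulLog_sum_le fun a _ => marginalPMF_nonneg hp _ _

lemma hent_sum_lt {p : (V → A) → ℝ} (hp : ∀ x, 0 ≤ p x) {S : Finset V} {j : V} (hj : j ∉ S)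
    {y₀ : ↥S → A} {a b : A} (hab : a ≠ b)
    (ha : 0 < marginalPMF p (insert j S) (extFun S j y₀ a))
    (hb : 0 < marginalPMF p (insert j S) (extFun S j y₀ b)) :
    ∑ y : ↥S → A, Real.negMulLog (marginalPMF p S y)
      < ∑ z : ↥(insert j S) → A, Real.negMulLog (marginalPMF p (insert j S) z) := by
  rw [sum_insert_split hj]
  refine Finset.sum_lt_sum (fun y _ => ?_) ⟨y₀, Finset.mem_univ _, ?_⟩
  · rw [← marginalPMF_ext_sum p hj y]
    exact negMulLog_sum_le fun c _ => marginalPMF_nonneg hp _ _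
  · rw [← marginalPMF_ext_sum p hj y₀]
    exact negMulLog_sum_lt (fun c _ => marginalPMF_nonneg hp _ _)
      (Finset.mem_univ a) (Finset.mem_univ b) hab ha hb

lemma hent_determinism {s : ℕ} (hs : 2 ≤ s) {p : (V → A) → ℝ} (hp : ∀ x, 0 ≤ p x)
    {S : Finset V} {j : V} (hj : j ∉ S)
    (hcon : Hent s p (insert j S) - Hent s p S = 0) :
    ∀ (y : ↥S → A) (a b : A), 0 < marginalPMF p (insert j S) (extFun S j y a) →
      0 < marginalPMF p (insert j S) (extFun S j y b) → a = b := by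
  intro y a b ha hb
  by_contra hab
  have hlog : (0 : ℝ) < Real.log s :=
    Real.log_pos (by exact_mod_cast Nat.lt_of_lt_of_le Nat.one_lt_two hs)
  have hlt := hent_sum_lt hp hj hab ha hb (y₀ := y)
  have h2 : Hent s p S < Hent s p (insert j S) := by
    unfold Hent
    gcongr
  have h3 := sub_eq_zero.1 hcon
  linarith

lemma hent_eq_of_det {s : ℕ} {p : (V → A) → ℝ} (hp : ∀ x, 0 ≤ p x)
    {S : Finset V} {j : V} (hj : j ∉ S)
    (hdet : ∀ (y : ↥S → A) (a b : A), marginalPMF p (insert j S) (extFun S j y a) ≠ 0 →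
      marginalPMF p (insert j S) (extFun S j y b) ≠ 0 → a = b) :
    Hent s p (insert j S) = Hent s p S := by
  unfold Hent
  congr 1
  rw [sum_insert_split hj]
  refine (Finset.sum_congr rfl fun y _ => ?_).symm
  rw [← marginalPMF_ext_sum p hj y]
  exact negMulLog_sum_eq fun a _ b _ ha hb => hdet y a b ha hb

end Marginal
section Strategy
variable {V : Type*} [Fintype V] [DecidableEq V]

/-- Uniform distribution on a finset of assignments. -/
noncomputable def unifOn {A : Type*} [DecidableEq A] (F : Finset (V → A)) : (V → A) → ℝ :=
  fun x => if x ∈ F then (F.card : ℝ)⁻¹ else 0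

lemma unifOn_nonneg {A : Type*} [DecidableEq A] (F : Finset (V → A)) : ∀ x, 0 ≤ unifOn F x := by
  intro x
  unfold unifOn
  split
  · positivity
  · exact le_rfl

lemma unifOn_mem {A : Type*} [DecidableEq A] {F : Finset (V → A)} {x : V → A} (h : unifOn F x ≠ 0) : x ∈ F := by
  by_contra hx
  rw [unifOn, if_neg hx] at h
  exact h rfl

lemma unifOn_isProbDist {A : Type*} [Fintype A] [DecidableEq A] {F : Finset (V → A)} (hF : F.Nonempty) :
    IsProbDist (unifOn F) := by
  refine ⟨unifOn_nonneg F, ?_⟩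
  have hc : (0 : ℝ) < F.card := by exact_mod_cast Finset.card_pos.2 hF
  rw [← Finset.sum_subset (Finset.subset_univ F) (fun x _ hx => by rw [unifOn, if_neg hx])]
  rw [Finset.sum_congr rfl (fun x hx => by rw [unifOn, if_pos hx]), Finset.sum_const,
    nsmul_eq_mul]
  field_simp

lemma marginalPMF_univ {A : Type*} [Fintype A] [DecidableEq A] (p : (V → A) → ℝ)
    (y : ↥(Finset.univ : Finset V) → A) :
    marginalPMF p Finset.univ y = p (fun v => y ⟨v, Finset.mem_univ v⟩) := by
  unfold marginalPMF
  have hcond : ∀ x : V → A,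
      (∀ i : ↥(Finset.univ : Finset V), x i.1 = y i) ↔ (x = fun v => y ⟨v, Finset.mem_univ v⟩) := by
    intro x
    constructor
    · intro h; funext v; exact h ⟨v, Finset.mem_univ v⟩
    · intro h i
      rw [h]
  rw [Finset.sum_congr rfl fun x _ => if_congr (hcond x) rfl rfl]
  rw [Finset.sum_ite_eq' Finset.univ (fun v => y ⟨v, Finset.mem_univ v⟩) p,
    if_pos (Finset.mem_univ _)]

lemma Hent_univ {A : Type*} [Fintype A] [DecidableEq A] (s : ℕ) (p : (V → A) → ℝ) :
    Hent s p Finset.univ = (∑ x : V → A, Real.negMulLog (p x)) / Real.log s := by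
  unfold Hent
  congr 1
  refine Fintype.sum_equiv
    (Equiv.arrowCongr (Equiv.subtypeUnivEquiv (fun v => Finset.mem_univ v)) (Equiv.refl A))
    _ _ fun y => ?_
  rw [marginalPMF_univ]
  rfl

lemma Hent_unifOn {A : Type*} [Fintype A] [DecidableEq A] (s : ℕ) {F : Finset (V → A)}
    (hF : F.Nonempty) : Hent s (unifOn F) Finset.univ = Real.logb s F.card := by
  rw [Hent_univ]
  have hc : (0 : ℝ) < F.card := by exact_mod_cast Finset.card_pos.2 hF
  have hsum : ∑ x : V → A, Real.negMulLog (unifOn F x) = Real.log F.card := by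
    rw [← Finset.sum_subset (Finset.subset_univ F)
      (fun x _ hx => by rw [unifOn, if_neg hx, Real.negMulLog_zero])]
    rw [Finset.sum_congr rfl (fun x hx => by rw [unifOn, if_pos hx]), Finset.sum_const,
      nsmul_eq_mul, Real.negMulLog, Real.log_inv]
    field_simp
  rw [hsum, Real.logb]

lemma Hent_le_logb {A : Type*} [Fintype A] [DecidableEq A] {s : ℕ} (hs : 2 ≤ s)
    {p : (V → A) → ℝ} (hp : IsProbDist p) {F : Finset (V → A)}
    (hF : ∀ x, p x ≠ 0 → x ∈ F) : Hent s p Finset.univ ≤ Real.logb s F.card := by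
  have hlog : (0 : ℝ) < Real.log s :=
    Real.log_pos (by exact_mod_cast Nat.lt_of_lt_of_le Nat.one_lt_two hs)
  have hFne : F.Nonempty := by
    have hone : (∑ x : V → A, p x) ≠ 0 := by rw [hp.2]; norm_num
    obtain ⟨x, _, hx⟩ := Finset.exists_ne_zero_of_sum_ne_zero hone
    exact ⟨x, hF x hx⟩
  have hsum : ∑ x ∈ F, p x = 1 := by
    rw [← hp.2]
    exact Finset.sum_subset (Finset.subset_univ F)
      (fun x _ hx => by_contra fun h => hx (hF x h))
  have hle := sum_negMulLog_le_log_card hFne (fun i _ => hp.1 i) hsum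
  have hfull : ∑ x : V → A, Real.negMulLog (p x) = ∑ x ∈ F, Real.negMulLog (p x) := by
    refine (Finset.sum_subset (Finset.subset_univ F) fun x _ hx => ?_).symm
    have : p x = 0 := by_contra fun h => hx (hF x h)
    rw [this, Real.negMulLog_zero]
  rw [Hent_univ, hfull, Real.logb]
  gcongr

variable (E : V → V → Prop) [DecidableRel E]

/-- The strategy extracted from a distribution satisfying the information constraints. -/
noncomputable def stratOf (s : ℕ) [NeZero s] (p : (V → Fin s) → ℝ) :
    V → (V → Fin s) → Fin s := fun j x =>
  if j ∈ inNbr E j then x j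
  else if h : ∃ a : Fin s, 0 < marginalPMF p (insert j (inNbr E j))
      (extFun (inNbr E j) j (fun i => x i.1) a) then h.choose else 0

lemma stratOf_isStrategy (s : ℕ) [NeZero s] (p : (V → Fin s) → ℝ) :
    IsStrategy E (stratOf E s p) := by
  intro j x y hxy
  by_cases hj : j ∈ inNbr E j
  · have hEjj : E j j := (Finset.mem_filter.1 hj).2
    simp only [stratOf, if_pos hj]
    exact hxy j hEjj
  · have hres : (fun i : ↥(inNbr E j) => x i.1) = fun i => y i.1 :=
      funext fun i => hxy i.1 (Finset.mem_filter.1 i.2).2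
    simp only [stratOf, if_neg hj, hres]

lemma stratOf_correct {s : ℕ} (hs : 2 ≤ s) [NeZero s] {p : (V → Fin s) → ℝ}
    (hp : IsProbDist p) (hc : InfoConstraints E s p) {x : V → Fin s} (hx : p x ≠ 0) :
    x ∈ correctSet (stratOf E s p) := by
  have hpx : 0 < p x := (hp.1 x).lt_of_ne (Ne.symm hx)
  refine Finset.mem_filter.2 ⟨Finset.mem_univ x, fun j => ?_⟩
  by_cases hj : j ∈ inNbr E j
  · simp only [stratOf, if_pos hj]
  · have hagr : ∀ i : ↥(insert j (inNbr E j)),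
        x i.1 = extFun (inNbr E j) j (fun i : ↥(inNbr E j) => x i.1) (x j) i :=
      (agrees_extFun hj x _ (x j)).2 ⟨fun i => rfl, rfl⟩
    have hpos : 0 < marginalPMF p (insert j (inNbr E j))
        (extFun (inNbr E j) j (fun i : ↥(inNbr E j) => x i.1) (x j)) :=
      marginalPMF_pos hp.1 hpx hagr
    have hex : ∃ a, 0 < marginalPMF p (insert j (inNbr E j))
        (extFun (inNbr E j) j (fun i : ↥(inNbr E j) => x i.1) a) := ⟨x j, hpos⟩
    simp only [stratOf, if_neg hj, dif_pos hex]
    exact hent_determinism hs hp.1 hj (hc j) _ _ _ hex.choose_spec hpos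

lemma unifOn_infoConstraints {s : ℕ} {A : Type*} [Fintype A] [DecidableEq A]
    {g : V → (V → A) → A} (hg : IsStrategy E g) :
    InfoConstraints E s (unifOn (correctSet g)) := by
  intro j
  by_cases hj : j ∈ inNbr E j
  · rw [Finset.insert_eq_self.2 hj, sub_self]
  · rw [hent_eq_of_det (unifOn_nonneg _) hj ?_, sub_self]
    intro y a b ha hb
    obtain ⟨xa, hpa, hga⟩ := marginalPMF_exists_pos ha
    obtain ⟨xb, hpb, hgb⟩ := marginalPMF_exists_pos hb
    have hxa : ∀ j', g j' xa = xa j' := (Finset.mem_filter.1 (unifOn_mem hpa)).2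
    have hxb : ∀ j', g j' xb = xb j' := (Finset.mem_filter.1 (unifOn_mem hpb)).2
    obtain ⟨h1a, h2a⟩ := (agrees_extFun hj xa y a).1 hga
    obtain ⟨h1b, h2b⟩ := (agrees_extFun hj xb y b).1 hgb
    have hgab : g j xa = g j xb := by
      refine hg j xa xb fun i hEij => ?_
      have hiS : i ∈ inNbr E j := Finset.mem_filter.2 ⟨Finset.mem_univ i, hEij⟩
      rw [h1a ⟨i, hiS⟩, ← h1b ⟨i, hiS⟩]
    rw [← h2a, ← h2b, ← hxa j, ← hxb j, hgab]

end Strategy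
section Counting
variable {V : Type*} [Fintype V] [DecidableEq V]
variable {E : V → V → Prop} [DecidableRel E]

lemma no_total_pred {S : Finset V} (hA : AcyclicOn E S) {D : Finset V} (hne : D.Nonempty)
    (hDS : ∀ d ∈ D, d ∈ S) (hpred : ∀ d ∈ D, ∃ i ∈ D, E i d) : False := by
  classical
  have hnxt : ∀ d : ↥D, ∃ i : ↥D, E i.1 d.1 := by
    rintro ⟨d, hd⟩
    obtain ⟨i, hi, he⟩ := hpred d hd
    exact ⟨⟨i, hi⟩, he⟩
  choose nxt hnx using hnxt
  obtain ⟨d0, hd0⟩ := hne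
  set f : ℕ → ↥D := fun n => nxt^[n] ⟨d0, hd0⟩ with hf
  have hstep : ∀ n, E (f (n + 1)).1 (f n).1 := by
    intro n
    have h1 : f (n + 1) = nxt (f n) := Function.iterate_succ_apply' nxt n _
    rw [h1]
    exact hnx (f n)
  set R : V → V → Prop := fun a b => a ∈ S ∧ b ∈ S ∧ E a b with hR
  have htg : ∀ n m : ℕ, m < n → Relation.TransGen R (f n).1 (f m).1 := by
    intro n
    induction n with
    | zero => omega
    | succ n ih =>
      intro m hm
      have hRs : R (f (n + 1)).1 (f n).1 := ⟨hDS _ (f (n + 1)).2, hDS _ (f n).2, hstep n⟩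
      rcases Nat.lt_succ_iff_lt_or_eq.1 hm with h | h
      · exact (Relation.TransGen.single hRs).trans (ih m h)
      · rw [h]
        exact Relation.TransGen.single hRs
  obtain ⟨a, b, hab, hfab⟩ := Finite.exists_ne_map_eq_of_infinite f
  rcases hab.lt_or_gt with h | h
  · exact hA (f a).1 (hDS _ (f a).2) (hfab ▸ htg b a h)
  · exact hA (f b).1 (hDS _ (f b).2) (hfab ▸ htg a b h)

variable (B : Finset V) {s : ℕ} [NeZero s]

/-- The "syndrome" map: `B`-values together with the guessing errors outside `B`. -/
def synd (g : V → (V → Fin s) → Fin s) (x : V → Fin s) :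
    (↥B → Fin s) × (↥(Finset.univ \ B) → Fin s) :=
  (fun b => x b.1, fun j => x j.1 - g j.1 x)

lemma synd_injective (hB : AcyclicOn E (Finset.univ \ B)) {g : V → (V → Fin s) → Fin s} (hg : IsStrategy E g) :
    Function.Injective (synd B g) := by
  intro x y hxy
  by_contra hne
  have hD : (Finset.univ.filter (fun v => x v ≠ y v)).Nonempty := by
    rw [Finset.filter_nonempty_iff]
    by_contra h
    push_neg at h
    exact hne (funext fun v => h v (Finset.mem_univ v))
  set D := Finset.univ.filter (fun v => x v ≠ y v) with hDdef
  have hDmem : ∀ d, d ∈ D ↔ x d ≠ y d := fun d => by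
    rw [hDdef, Finset.mem_filter]
    exact ⟨fun h => h.2, fun h => ⟨Finset.mem_univ d, h⟩⟩
  have hDS : ∀ d ∈ D, d ∈ Finset.univ \ B := by
    intro d hd
    rw [Finset.mem_sdiff]
    refine ⟨Finset.mem_univ d, fun hdB => ?_⟩
    have := congrFun (congrArg Prod.fst hxy) ⟨d, hdB⟩
    exact (hDmem d).1 hd this
  refine no_total_pred hB hD hDS ?_
  intro d hd
  have hdB : d ∈ Finset.univ \ B := hDS d hd
  have h2 := congrFun (congrArg Prod.snd hxy) ⟨d, hdB⟩
  simp only [synd] at h2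
  have hgne : g d x ≠ g d y := by
    intro hgeq
    rw [hgeq, sub_left_inj] at h2
    exact (hDmem d).1 hd h2
  have : ¬ ∀ i, E i d → x i = y i := fun h => hgne (hg d x y h)
  push_neg at this
  obtain ⟨i, hEid, hine⟩ := this
  exact ⟨i, (hDmem i).2 hine, hEid⟩

lemma synd_bijective (hB : AcyclicOn E (Finset.univ \ B)) {g : V → (V → Fin s) → Fin s} (hg : IsStrategy E g) :
    Function.Bijective (synd B g) := by
  have hs1 : 1 ≤ s := Nat.one_le_iff_ne_zero.2 (NeZero.ne s)
  refine (Fintype.bijective_iff_injective_and_card _).2 ⟨synd_injective B hB hg, ?_⟩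
  rw [Fintype.card_prod, Fintype.card_fun, Fintype.card_fun, Fintype.card_fun,
    Fintype.card_coe, Fintype.card_coe, Fintype.card_fin,
    Finset.card_sdiff_of_subset (Finset.subset_univ B), ← pow_add, Finset.card_univ,
    Nat.add_sub_cancel' (by simpa using Finset.card_le_card (Finset.subset_univ B))]

/-- A solvable strategy has exactly `s ^ |B|` fixed points. -/
lemma correct_card_of_solvable (hB : AcyclicOn E (Finset.univ \ B)) {g : V → (V → Fin s) → Fin s} (hg : IsStrategy E g)
    (hsolv : ∀ x : V → Fin s, (∀ j, j ∉ B → x j = g j x) → ∀ b ∈ B, x b = g b x) :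
    (correctSet g).card = s ^ B.card := by
  have hbij := synd_bijective B hB hg
  have hcard : (correctSet g).card = Fintype.card (↥B → Fin s) := by
    refine Finset.card_bij (fun x _ => fun b : ↥B => x b.1) (fun _ _ => Finset.mem_univ _)
      ?_ ?_
    · intro x hx y hy hxy
      have hx' : ∀ j, g j x = x j := (Finset.mem_filter.1 hx).2
      have hy' : ∀ j, g j y = y j := (Finset.mem_filter.1 hy).2
      refine synd_injective B hB hg ?_
      refine Prod.ext hxy (funext fun j => ?_)
      simp only [synd, hx' j.1, hy' j.1, sub_self]
    · intro c _
      obtain ⟨x, hx⟩ := hbij.2 (c, 0)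
      have h1 : (fun b : ↥B => x b.1) = c := congrArg Prod.fst hx
      have h2 : ∀ j : ↥(Finset.univ \ B), x j.1 - g j.1 x = 0 := by
        intro j
        exact congrFun (congrArg Prod.snd hx) j
      have hVB : ∀ j, j ∉ B → x j = g j x := by
        intro j hj
        have := h2 ⟨j, Finset.mem_sdiff.2 ⟨Finset.mem_univ j, hj⟩⟩
        exact sub_eq_zero.1 this
      have hall : ∀ j, g j x = x j := by
        intro j
        by_cases hj : j ∈ B
        · exact (hsolv x hVB j hj).symm
        · exact (hVB j hj).symm
      exact ⟨x, Finset.mem_filter.2 ⟨Finset.mem_univ x, hall⟩, h1⟩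
  rw [hcard, Fintype.card_fun, Fintype.card_coe, Fintype.card_fin]

lemma correct_card_le (hB : AcyclicOn E (Finset.univ \ B)) {g : V → (V → Fin s) → Fin s} (hg : IsStrategy E g) :
    (correctSet g).card ≤ s ^ B.card := by
  have hinj : Set.InjOn (fun x : V → Fin s => (fun b : ↥B => x b.1)) (correctSet g) := by
    intro x hx y hy hxy
    have hx' : ∀ j, g j x = x j := (Finset.mem_filter.1 (by exact_mod_cast hx)).2
    have hy' : ∀ j, g j y = y j := (Finset.mem_filter.1 (by exact_mod_cast hy)).2
    refine synd_injective B hB hg ?_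
    refine Prod.ext hxy (funext fun j => ?_)
    simp only [synd, hx' j.1, hy' j.1, sub_self]
  have h := Finset.card_le_card_of_injOn (t := (Finset.univ : Finset (↥B → Fin s)))
    (fun x : V → Fin s => (fun b : ↥B => x b.1)) (fun _ _ => Finset.mem_univ _) hinj
  calc (correctSet g).card ≤ (Finset.univ : Finset (↥B → Fin s)).card := h
    _ = s ^ B.card := by rw [Finset.card_univ, Fintype.card_fun, Fintype.card_coe,
      Fintype.card_fin]

/-- If some "almost correct" point fails on `B`, the number of fixed points is
strictly less than `s ^ |B|`. -/
lemma correct_card_lt (hB : AcyclicOn E (Finset.univ \ B)) {g : V → (V → Fin s) → Fin s} (hg : IsStrategy E g)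
    {x₀ : V → Fin s} (h0 : ∀ j, j ∉ B → x₀ j = g j x₀) {b₀ : V} (hb₀ : b₀ ∈ B)
    (hbad : x₀ b₀ ≠ g b₀ x₀) : (correctSet g).card < s ^ B.card := by
  have hx₀synd : (synd B g x₀).2 = 0 := by
    funext j
    exact sub_eq_zero.2 (h0 j.1 (Finset.mem_sdiff.1 j.2).2)
  have hx₀not : x₀ ∉ correctSet g := by
    intro h
    exact hbad ((Finset.mem_filter.1 h).2 b₀).symm
  have hinj : Function.Injective
      (fun z : ↥(correctSet g) => (fun b : ↥B => z.1 b.1 : ↥B → Fin s)) := by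
    intro z w hzw
    have hz' : ∀ j, g j z.1 = z.1 j := (Finset.mem_filter.1 z.2).2
    have hw' : ∀ j, g j w.1 = w.1 j := (Finset.mem_filter.1 w.2).2
    refine Subtype.ext (synd_injective B hB hg (Prod.ext hzw (funext fun j => ?_)))
    simp only [synd, hz' j.1, hw' j.1, sub_self]
  have hnsurj : ¬ Function.Surjective
      (fun z : ↥(correctSet g) => (fun b : ↥B => z.1 b.1 : ↥B → Fin s)) := by
    intro hsurj
    obtain ⟨z, hz⟩ := hsurj (fun b : ↥B => x₀ b.1)
    have hzsynd : (synd B g z.1).2 = 0 := by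
      have hz' : ∀ j, g j z.1 = z.1 j := (Finset.mem_filter.1 z.2).2
      funext j
      simp only [synd, hz' j.1, sub_self]
      rfl
    have : z.1 = x₀ := by
      refine synd_injective B hB hg ?_
      refine Prod.ext ?_ ?_
      · exact hz
      · rw [hzsynd, hx₀synd]
    exact hx₀not (this ▸ z.2)
  have := Fintype.card_lt_of_injective_not_surjective _ hinj hnsurj
  rwa [Fintype.card_coe, Fintype.card_fun, Fintype.card_coe, Fintype.card_fin] at this

end Counting
section Protocol
variable {V : Type*} [Fintype V] [DecidableEq V]
variable {E : V → V → Prop} [DecidableRel E]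

lemma fiber_strategy {s : ℕ} {W : Type*} {Φ : (V → Fin s) → W}
    {d : V → (V → Fin s) → W → Fin s} (hcode : IsIndexCode E Φ d) (w : W) :
    IsStrategy E (fun j x => d j x w) :=
  fun j x y hxy => hcode.1 j x y w hxy

lemma fiber_subset_correct {s : ℕ} {W : Type*} {Φ : (V → Fin s) → W}
    {d : V → (V → Fin s) → W → Fin s} (hcode : IsIndexCode E Φ d) (w : W)
    {x : V → Fin s} (hx : Φ x = w) : x ∈ correctSet (fun j x => d j x w) := by
  refine Finset.mem_filter.2 ⟨Finset.mem_univ x, fun j => ?_⟩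
  show d j x w = x j
  rw [← hx]
  exact hcode.2 x j

lemma protocolEntropy_ge {s : ℕ} (hs : 2 ≤ s) {W : Type} [Fintype W] [DecidableEq W]
    (Φ : (V → Fin s) → W) {M : ℕ} (hM : 1 ≤ M)
    (hfib : ∀ w : W, (Finset.univ.filter (fun x : V → Fin s => Φ x = w)).card ≤ M) :
    (Fintype.card V : ℝ) - Real.logb s M ≤ protocolEntropy s Φ := by
  have hlog : (0 : ℝ) < Real.log s :=
    Real.log_pos (by exact_mod_cast Nat.lt_of_lt_of_le Nat.one_lt_two hs)
  set n := Fintype.card V with hn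
  have hSc : (0 : ℝ) < (s : ℝ) ^ n := by positivity
  set Sc : ℝ := (s : ℝ) ^ n with hScdef
  have hMpos : (0 : ℝ) < M := by exact_mod_cast hM
  -- sum of fiber sizes is s ^ n
  have hsum : ∑ w : W, ((Finset.univ.filter (fun x : V → Fin s => Φ x = w)).card : ℝ) = Sc := by
    have h1 : (Finset.univ : Finset (V → Fin s)).card
        = ∑ w ∈ Finset.univ, (Finset.univ.filter (fun x : V → Fin s => Φ x = w)).card :=
      Finset.card_eq_sum_card_fiberwise (fun x _ => Finset.mem_univ (Φ x))
    have h2 : ((Finset.univ : Finset (V → Fin s)).card : ℝ) = Sc := by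
      rw [Finset.card_univ, Fintype.card_fun, Fintype.card_fin, hScdef]
      push_cast
      rfl
    rw [← h2, h1]
    push_cast
    rfl
  have hterm : ∀ w : W,
      ((Finset.univ.filter (fun x : V → Fin s => Φ x = w)).card : ℝ) / Sc
        * (Real.log Sc - Real.log M)
      ≤ Real.negMulLog (((Finset.univ.filter (fun x : V → Fin s => Φ x = w)).card : ℝ) / Sc) := by
    intro w
    set c : ℕ := (Finset.univ.filter (fun x : V → Fin s => Φ x = w)).card with hc
    rcases Nat.eq_zero_or_pos c with h0 | hpos
    · simp [h0]
    · have hcpos : (0 : ℝ) < c := by exact_mod_cast hpos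
      have hcM : (c : ℝ) ≤ M := by exact_mod_cast hfib w
      have hexp : Real.negMulLog ((c : ℝ) / Sc)
          = (c : ℝ) / Sc * (Real.log Sc - Real.log c) := by
        rw [Real.negMulLog, Real.log_div (ne_of_gt hcpos) (ne_of_gt hSc)]
        ring
      rw [hexp]
      apply mul_le_mul_of_nonneg_left _ (by positivity)
      have : Real.log (M : ℝ) ≥ Real.log c := Real.log_le_log hcpos hcM
      linarith
  have hsum2 : Real.log Sc - Real.log M
      ≤ ∑ w : W, Real.negMulLog
        (((Finset.univ.filter (fun x : V → Fin s => Φ x = w)).card : ℝ) / Sc) := by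
    calc Real.log Sc - Real.log M
        = (∑ w : W, ((Finset.univ.filter (fun x : V → Fin s => Φ x = w)).card : ℝ) / Sc)
          * (Real.log Sc - Real.log M) := by
          rw [← Finset.sum_div, hsum, div_self (ne_of_gt hSc), one_mul]
      _ = ∑ w : W, ((Finset.univ.filter (fun x : V → Fin s => Φ x = w)).card : ℝ) / Sc
          * (Real.log Sc - Real.log M) := Finset.sum_mul _ _ _
      _ ≤ _ := Finset.sum_le_sum fun w _ => hterm w
  have hfinal : (Real.log Sc - Real.log M) / Real.log s = (n : ℝ) - Real.logb s M := by
    rw [hScdef, Real.log_pow, Real.logb, sub_div, mul_div_assoc,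
      div_self (ne_of_gt hlog), mul_one]
  rw [protocolEntropy, ← hfinal]
  gcongr

variable (B : Finset V)

/-- Reconstruction of the normal form from own data and the broadcast. -/
def recon {s : ℕ} [NeZero s] (x : V → Fin s) (w : ↥(Finset.univ \ B) → Fin s) : V → Fin s :=
  fun v => if h : v ∈ B then x v
    else x v - w ⟨v, Finset.mem_sdiff.2 ⟨Finset.mem_univ v, h⟩⟩

/-- The normal form with given `B`-values: same `B`-values, zero syndrome. -/
noncomputable def nfOf {s : ℕ} [NeZero s] (g : V → (V → Fin s) → Fin s)
    (c : ↥B → Fin s) : V → Fin s :=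
  Function.invFun (synd B g) (c, 0)

/-- The broadcast map of the index code obtained from a solving strategy. -/
noncomputable def PhiOf {s : ℕ} [NeZero s] (g : V → (V → Fin s) → Fin s)
    (x : V → Fin s) : ↥(Finset.univ \ B) → Fin s :=
  fun j => x j.1 - nfOf B g (fun b : ↥B => x b.1) j.1

/-- The decoding maps of the index code obtained from a solving strategy. -/
noncomputable def decOf {s : ℕ} [NeZero s] (g : V → (V → Fin s) → Fin s) :
    V → (V → Fin s) → (↥(Finset.univ \ B) → Fin s) → Fin s :=
  fun j x w => if h : j ∈ B then g j (recon B x w)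
    else g j (recon B x w) + w ⟨j, Finset.mem_sdiff.2 ⟨Finset.mem_univ j, h⟩⟩

lemma protocol_works {s : ℕ} (hs : 2 ≤ s) [NeZero s]
    (hB : AcyclicOn E (Finset.univ \ B)) {g : V → (V → Fin s) → Fin s}
    (hg : IsStrategy E g)
    (hsolv : ∀ x : V → Fin s, (∀ j, j ∉ B → x j = g j x) → ∀ b ∈ B, x b = g b x) :
    IsIndexCode E (PhiOf B g) (decOf B g) ∧
      protocolEntropy s (PhiOf B g) = ((Finset.univ \ B).card : ℝ) := by
  have hbij := synd_bijective B hB hg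
  have hnf : ∀ c : ↥B → Fin s, synd B g (nfOf B g c) = (c, 0) :=
    fun c => Function.invFun_eq (hbij.2 (c, 0))
  have hnfB : ∀ (c : ↥B → Fin s) (b : ↥B), nfOf B g c b.1 = c b :=
    fun c b => congrFun (congrArg Prod.fst (hnf c)) b
  have hnfVB : ∀ (c : ↥B → Fin s) (j : V), j ∉ B → nfOf B g c j = g j (nfOf B g c) := by
    intro c j hj
    have := congrFun (congrArg Prod.snd (hnf c)) ⟨j, Finset.mem_sdiff.2 ⟨Finset.mem_univ j, hj⟩⟩
    exact sub_eq_zero.1 this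
  have hnfAll : ∀ (c : ↥B → Fin s) (j : V), nfOf B g c j = g j (nfOf B g c) := by
    intro c j
    by_cases hj : j ∈ B
    · exact hsolv (nfOf B g c) (fun j' hj' => hnfVB c j' hj') j hj
    · exact hnfVB c j hj
  have hrecon : ∀ x : V → Fin s, recon B x (PhiOf B g x) = nfOf B g (fun b : ↥B => x b.1) := by
    intro x
    funext v
    by_cases hv : v ∈ B
    · rw [recon, dif_pos hv]
      exact (hnfB (fun b : ↥B => x b.1) ⟨v, hv⟩).symm
    · rw [recon, dif_neg hv]
      show x v - PhiOf B g x ⟨v, _⟩ = _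
      rw [PhiOf, sub_sub_cancel]
  constructor
  · constructor
    · intro j x y w hxy
      have hreq : g j (recon B x w) = g j (recon B y w) := by
        refine hg j _ _ fun i hEij => ?_
        unfold recon
        by_cases hi : i ∈ B
        · rw [dif_pos hi, dif_pos hi, hxy i hEij]
        · rw [dif_neg hi, dif_neg hi, hxy i hEij]
      unfold decOf
      by_cases hj : j ∈ B
      · rw [dif_pos hj, dif_pos hj, hreq]
      · rw [dif_neg hj, dif_neg hj, hreq]
    · intro x j
      unfold decOf
      by_cases hj : j ∈ B
      · rw [dif_pos hj, hrecon, ← hnfAll]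
        exact hnfB (fun b : ↥B => x b.1) ⟨j, hj⟩
      · rw [dif_neg hj, hrecon, ← hnfAll]
        show nfOf B g _ j + (x j - nfOf B g _ j) = x j
        rw [add_comm, sub_add_cancel]
  · -- entropy computation
    have hfib : ∀ w : ↥(Finset.univ \ B) → Fin s,
        (Finset.univ.filter (fun x : V → Fin s => PhiOf B g x = w)).card = s ^ B.card := by
      intro w
      have hcard : (Finset.univ.filter (fun x : V → Fin s => PhiOf B g x = w)).card
          = Fintype.card (↥B → Fin s) := by
        refine Finset.card_bij (fun x _ => fun b : ↥B => x b.1) (fun _ _ => Finset.mem_univ _)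
          ?_ ?_
        · intro x hx y hy hxy
          have hwx : PhiOf B g x = w := (Finset.mem_filter.1 hx).2
          have hwy : PhiOf B g y = w := (Finset.mem_filter.1 hy).2
          funext v
          by_cases hv : v ∈ B
          · exact congrFun hxy ⟨v, hv⟩
          · have h1 := congrFun (hwx.trans hwy.symm) ⟨v, Finset.mem_sdiff.2 ⟨Finset.mem_univ v, hv⟩⟩
            have hxy' : (fun b : ↥B => x b.1) = fun b : ↥B => y b.1 := hxy
            rw [PhiOf, PhiOf, hxy'] at h1
            exact sub_left_inj.1 h1
        · intro c _
          set y := nfOf B g c with hy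
          set x0 : V → Fin s := fun v => if h : v ∈ B then y v
            else y v + w ⟨v, Finset.mem_sdiff.2 ⟨Finset.mem_univ v, h⟩⟩ with hx0
          have hres : (fun b : ↥B => x0 b.1) = c := by
            funext b
            simp only [hx0]
            rw [dif_pos b.2]
            exact hnfB c b
          have hPhi : PhiOf B g x0 = w := by
            funext j
            have hj : (j : V) ∉ B := (Finset.mem_sdiff.1 j.2).2
            simp only [PhiOf, hres]
            rw [← hy]
            simp only [hx0]
            rw [dif_neg hj]
            have hj' : (⟨j.1, Finset.mem_sdiff.2 ⟨Finset.mem_univ j.1, hj⟩⟩ :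
                ↥(Finset.univ \ B)) = j := Subtype.ext rfl
            rw [hj', add_sub_cancel_left]
          exact ⟨x0, Finset.mem_filter.2 ⟨Finset.mem_univ _, hPhi⟩, hres⟩
      rw [hcard, Fintype.card_fun, Fintype.card_coe, Fintype.card_fin]
    -- now compute the entropy
    have hlog : (0 : ℝ) < Real.log s :=
      Real.log_pos (by exact_mod_cast Nat.lt_of_lt_of_le Nat.one_lt_two hs)
    set m := (Finset.univ \ B).card with hm
    have hkm : B.card + m = Fintype.card V := by
      rw [hm, Finset.card_sdiff_of_subset (Finset.subset_univ B), Finset.card_univ,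
        Nat.add_sub_cancel' (by simpa using Finset.card_le_card (Finset.subset_univ B))]
    have hratio : ∀ w : ↥(Finset.univ \ B) → Fin s,
        ((Finset.univ.filter (fun x : V → Fin s => PhiOf B g x = w)).card : ℝ)
          / (s : ℝ) ^ Fintype.card V = ((s : ℝ) ^ m)⁻¹ := by
      intro w
      rw [hfib w, ← hkm, pow_add]
      have hsne : (0:ℝ) < (s:ℝ) ^ B.card := by positivity
      have hmne : (0:ℝ) < (s:ℝ) ^ m := by positivity
      push_cast
      field_simp
    rw [protocolEntropy]
    rw [Finset.sum_congr rfl fun w _ => by rw [hratio w]]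
    rw [Finset.sum_const, Finset.card_univ, Fintype.card_fun, Fintype.card_coe,
      Fintype.card_fin, nsmul_eq_mul]
    rw [Real.negMulLog, Real.log_inv, Real.log_pow]
    have hmne : (0:ℝ) < (s:ℝ) ^ m := by positivity
    field_simp
    rw [← hm]
    push_cast
    rfl
end Protocol
end RiisAux

/-- Let `B` be a split of `G` of size `k`. The split network `N_G`
is solvable over `Fin s` iff `G` has private entropy `k` over `Fin s`, and also iff `G`
has public entropy `k` over `Fin s` (`E^public(G,s) = n − i_entro(G,s)`). -/
theorem split_network_solvable_iff_entropy {V : Type} [Fintype V] [DecidableEq V]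
    (E : V → V → Prop) [DecidableRel E] (B : Finset V)
    (hB : AcyclicOn E (Finset.univ \ B)) (s : ℕ) (hs : 2 ≤ s) :
    ((∃ g : V → (V → Fin s) → Fin s, IsStrategy E g ∧
        ∀ x : V → Fin s, (∀ j, j ∉ B → x j = g j x) → ∀ b ∈ B, x b = g b x)
      ↔ graphEntropy E s = (B.card : ℝ))
    ∧ ((∃ g : V → (V → Fin s) → Fin s, IsStrategy E g ∧
        ∀ x : V → Fin s, (∀ j, j ∉ B → x j = g j x) → ∀ b ∈ B, x b = g b x)
      ↔ (Fintype.card V : ℝ) - indexCodeEntro E s = (B.card : ℝ)) := by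
  haveI : NeZero s := ⟨by omega⟩
  have hs1 : (1 : ℝ) < (s : ℝ) := by exact_mod_cast (by omega : 1 < s)
  have hlog : (0 : ℝ) < Real.log s := Real.log_pos hs1
  have hlogb_pow : ∀ t : ℕ, Real.logb s ((s : ℝ) ^ t) = t := by
    intro t
    rw [Real.logb, Real.log_pow, mul_div_assoc, div_self (ne_of_gt hlog), mul_one]
  have hkn : B.card + (Finset.univ \ B).card = Fintype.card V := by
    rw [Finset.card_sdiff_of_subset (Finset.subset_univ B), Finset.card_univ,
      Nat.add_sub_cancel' (by simpa using Finset.card_le_card (Finset.subset_univ B))]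
  set gset := {h : ℝ | ∃ p : (V → Fin s) → ℝ,
    IsProbDist p ∧ InfoConstraints E s p ∧ h = Hent s p Finset.univ} with hgset
  set iset := {h : ℝ | ∃ (W : Type) (iW : Fintype W) (dW : DecidableEq W)
    (Φ : (V → Fin s) → W) (d : V → (V → Fin s) → W → Fin s),
    IsIndexCode E Φ d ∧ h = @protocolEntropy V (Fin s) W _ _ _ _ iW dW s Φ} with hiset
  -- the identity protocol shows `iset` is nonempty
  have hiset_ne : iset.Nonempty := by
    refine ⟨_, ⟨V → Fin s, inferInstance, inferInstance, id, fun j x w => w j,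
      ⟨fun j x y w hxy => rfl, fun x j => rfl⟩, rfl⟩⟩
  -- the constant strategy shows `gset` is nonempty
  have hgset_ne : gset.Nonempty := by
    have hgc : IsStrategy E (fun (_ : V) (_ : V → Fin s) => (0 : Fin s)) :=
      fun j x y _ => rfl
    have hmemc : (fun _ : V => (0 : Fin s)) ∈ correctSet
        (fun (_ : V) (_ : V → Fin s) => (0 : Fin s)) :=
      Finset.mem_filter.2 ⟨Finset.mem_univ _, fun _ => rfl⟩
    have hnec : (correctSet (fun (_ : V) (_ : V → Fin s) => (0 : Fin s))).Nonempty :=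
      ⟨_, hmemc⟩
    exact ⟨_, ⟨_, unifOn_isProbDist hnec, unifOn_infoConstraints E hgc, rfl⟩⟩
  -- every member of gset is bounded by `logb s M` for `M` bounding all correct sets
  have hub : ∀ (M : ℕ), 1 ≤ M →
      (∀ g : V → (V → Fin s) → Fin s, IsStrategy E g → (correctSet g).card ≤ M) →
      ∀ h ∈ gset, h ≤ Real.logb s M := by
    intro M hM hbound h hh
    obtain ⟨p, hp, hc, rfl⟩ := hh
    have hsupp : ∀ x, p x ≠ 0 → x ∈ correctSet (stratOf E s p) :=
      fun x hx => stratOf_correct E hs hp hc hx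
    have hle := Hent_le_logb hs hp hsupp
    have hone : (∑ x : V → Fin s, p x) ≠ 0 := by rw [hp.2]; norm_num
    obtain ⟨x, _, hx⟩ := Finset.exists_ne_zero_of_sum_ne_zero hone
    have hpos : 0 < (correctSet (stratOf E s p)).card :=
      Finset.card_pos.2 ⟨x, hsupp x hx⟩
    refine hle.trans ?_
    have hcard := hbound _ (stratOf_isStrategy E s p)
    exact (Real.logb_le_logb hs1 (by exact_mod_cast hpos)
      (by exact_mod_cast Nat.lt_of_lt_of_le Nat.zero_lt_one hM)).2 (by exact_mod_cast hcard)
  -- every member of iset is bounded below by `n - logb s M`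
  have hlb : ∀ (M : ℕ), 1 ≤ M →
      (∀ g : V → (V → Fin s) → Fin s, IsStrategy E g → (correctSet g).card ≤ M) →
      ∀ h ∈ iset, (Fintype.card V : ℝ) - Real.logb s M ≤ h := by
    intro M hM hbound h hh
    obtain ⟨W, iW, dW, Φ, d, hcode, rfl⟩ := hh
    refine protocolEntropy_ge hs Φ hM ?_
    intro w
    refine le_trans (Finset.card_le_card ?_) (hbound _ (fiber_strategy hcode w))
    intro x hx
    exact fiber_subset_correct hcode w (Finset.mem_filter.1 hx).2
  -- solvable case: all correct sets have ≤ s ^ k elements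
  have hble : ∀ g : V → (V → Fin s) → Fin s, IsStrategy E g →
      (correctSet g).card ≤ s ^ B.card := fun g hg => correct_card_le B hB hg
  have hpk1 : 1 ≤ s ^ B.card := Nat.one_le_pow _ _ (by omega)
  -- Solvability implies both entropy statements
  have hSolvG : (∃ g : V → (V → Fin s) → Fin s, IsStrategy E g ∧
      ∀ x : V → Fin s, (∀ j, j ∉ B → x j = g j x) → ∀ b ∈ B, x b = g b x) →
      graphEntropy E s = (B.card : ℝ) := by
    rintro ⟨g, hg, hsolv⟩
    have hcard := correct_card_of_solvable B hB hg hsolv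
    have hne : (correctSet g).Nonempty := by
      rw [← Finset.card_pos, hcard]
      omega
    have hmem : (B.card : ℝ) ∈ gset := by
      refine ⟨_, unifOn_isProbDist hne, unifOn_infoConstraints E hg, ?_⟩
      rw [Hent_unifOn s hne, hcard]
      rw [show ((s ^ B.card : ℕ) : ℝ) = (s : ℝ) ^ B.card by push_cast; rfl, hlogb_pow]
    have hub' := hub (s ^ B.card) hpk1 hble
    have hk : Real.logb s ((s ^ B.card : ℕ) : ℝ) = (B.card : ℝ) := by
      rw [show ((s ^ B.card : ℕ) : ℝ) = (s : ℝ) ^ B.card by push_cast; rfl, hlogb_pow]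
    have hbdd : BddAbove gset :=
      ⟨Real.logb s ((s ^ B.card : ℕ) : ℝ), fun h hh => hub' h hh⟩
    exact le_antisymm (csSup_le ⟨_, hmem⟩ fun h hh => (hub' h hh).trans_eq hk)
      (le_csSup hbdd hmem)
  have hSolvI : (∃ g : V → (V → Fin s) → Fin s, IsStrategy E g ∧
      ∀ x : V → Fin s, (∀ j, j ∉ B → x j = g j x) → ∀ b ∈ B, x b = g b x) →
      (Fintype.card V : ℝ) - indexCodeEntro E s = (B.card : ℝ) := by
    rintro ⟨g, hg, hsolv⟩
    obtain ⟨hcode, hent⟩ := protocol_works B hs hB hg hsolv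
    have hval : ((Finset.univ \ B).card : ℝ) = (Fintype.card V : ℝ) - (B.card : ℝ) := by
      have : ((B.card : ℝ)) + ((Finset.univ \ B).card : ℝ) = (Fintype.card V : ℝ) := by
        exact_mod_cast congrArg (fun t : ℕ => (t : ℝ)) hkn
      linarith
    have hmem : (Fintype.card V : ℝ) - (B.card : ℝ) ∈ iset := by
      refine ⟨_, inferInstance, inferInstance, PhiOf B g, decOf B g, hcode, ?_⟩
      rw [hent, hval]
    have hlb' := hlb (s ^ B.card) hpk1 hble
    have hk : Real.logb s ((s ^ B.card : ℕ) : ℝ) = (B.card : ℝ) := by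
      rw [show ((s ^ B.card : ℕ) : ℝ) = (s : ℝ) ^ B.card by push_cast; rfl, hlogb_pow]
    have hinf : indexCodeEntro E s = (Fintype.card V : ℝ) - (B.card : ℝ) := by
      have hbdd : BddBelow iset :=
        ⟨(Fintype.card V : ℝ) - Real.logb s ((s ^ B.card : ℕ) : ℝ), fun h hh => hlb' h hh⟩
      refine le_antisymm (csInf_le hbdd hmem) (le_csInf ⟨_, hmem⟩ fun h hh => ?_)
      have h2 := hlb' h hh
      rw [hk] at h2
      exact h2
    rw [hinf]
    ring
  -- if B is empty, solvability is trivial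
  have hBempty : B = ∅ → (∃ g : V → (V → Fin s) → Fin s, IsStrategy E g ∧
      ∀ x : V → Fin s, (∀ j, j ∉ B → x j = g j x) → ∀ b ∈ B, x b = g b x) := by
    intro hB0
    exact ⟨fun _ _ => 0, fun j x y _ => rfl, fun x _ b hb => absurd hb (by simp [hB0])⟩
  -- the non-solvable case: strict bounds
  have hNotSolv : ¬ (∃ g : V → (V → Fin s) → Fin s, IsStrategy E g ∧
      ∀ x : V → Fin s, (∀ j, j ∉ B → x j = g j x) → ∀ b ∈ B, x b = g b x) →
      (graphEntropy E s < (B.card : ℝ) ∧ (Fintype.card V : ℝ) - indexCodeEntro E s < (B.card : ℝ)) := by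
    intro hnot
    have hBne : B.Nonempty := by
      rcases Finset.eq_empty_or_nonempty B with h | h
      · exact absurd (hBempty h) hnot
      · exact h
    have hk1 : 1 ≤ B.card := Finset.card_pos.2 hBne
    have hsk2 : 2 ≤ s ^ B.card := by
      calc 2 = 2 ^ 1 := rfl
        _ ≤ s ^ B.card := Nat.pow_le_pow_left (by omega) 1 |>.trans
            (Nat.pow_le_pow_right (by omega) hk1)
    set M := s ^ B.card - 1 with hM
    have hM1 : 1 ≤ M := by omega
    have hMlt : M < s ^ B.card := by omega
    push_neg at hnot
    have hbound : ∀ g : V → (V → Fin s) → Fin s, IsStrategy E g →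
        (correctSet g).card ≤ M := by
      intro g hg
      obtain ⟨x, hx1, b, hb, hx2⟩ := hnot g hg
      have := correct_card_lt B hB hg hx1 hb hx2
      omega
    have hlogMk : Real.logb s ((M : ℕ) : ℝ) < (B.card : ℝ) := by
      have h1 : Real.logb s ((M : ℕ) : ℝ) < Real.logb s ((s : ℝ) ^ B.card) := by
        refine Real.logb_lt_logb hs1 (by exact_mod_cast hM1) ?_
        exact_mod_cast hMlt
      rwa [hlogb_pow] at h1
    constructor
    · calc graphEntropy E s ≤ Real.logb s ((M : ℕ) : ℝ) :=
          csSup_le hgset_ne (hub M hM1 hbound)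
        _ < (B.card : ℝ) := hlogMk
    · have hinf : (Fintype.card V : ℝ) - Real.logb s ((M : ℕ) : ℝ) ≤ indexCodeEntro E s :=
        le_csInf hiset_ne (hlb M hM1 hbound)
      linarith
  constructor
  · constructor
    · exact hSolvG
    · intro hE
      by_contra hnot
      exact absurd hE (ne_of_lt (hNotSolv hnot).1)
  · constructor
    · exact hSolvI
    · intro hE
      by_contra hnot
      exact absurd hE (ne_of_lt (hNotSolv hnot).2)
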